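/- For m ≥ 4 alternatives and every odd number n ≥ 15 of voters, there does not exist a Condorcet extension satisfying half-way monotonicity. -/

import Mathlib

/-- The reverse of a linear order: `a` is above `b` in `revOrder L` iff `b` is above `a` in `L`. -/
def revOrder {A : Type*} (L : LinearOrder A) : LinearOrder A :=
  @OrderDual.instLinearOrder A L

/-- `a` is the (unique) Condorcet winner of the profile `P`: for every other alternative `b`,
the number of voters preferring `a` to `b` (i.e. ranking `b` strictly below `a`) strictly
exceeds the number of voters preferring `b` to `a`. -/
def IsCondorcetWinner {A ι : Type*} (P : ι → LinearOrder A) (a : A) : Prop :=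
  ∀ b, b ≠ a → Nat.card {i // (P i).lt a b} < Nat.card {i // (P i).lt b a}

/-- A voting rule is a Condorcet extension if it selects the Condorcet winner whenever one
exists. -/
def CondorcetExtension {A ι : Type*} (f : (ι → LinearOrder A) → A) : Prop :=
  ∀ P a, IsCondorcetWinner P a → f P = a

/-- Half-way monotonicity: for every profile `P` and voter `i`, the outcome under truthful
voting is weakly preferred (w.r.t. `i`'s true order `P i`) to the outcome when `i` reverses
their preference ranking. -/
def HalfwayMonotone {A ι : Type*} [DecidableEq ι] (f : (ι → LinearOrder A) → A) : Prop :=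
  ∀ (P : ι → LinearOrder A) (i : ι),
    (P i).le (f (Function.update P i (revOrder (P i)))) (f P)

namespace HWM

/-- the table of base ballots (heights of the four special alternatives). -/
def bB : ℕ → Fin 4 → ℕ
  | 0 => ![1,0,2,3] | 1 => ![1,0,2,3] | 2 => ![3,2,0,1] | 3 => ![3,2,0,1]
  | 4 => ![3,2,0,1] | 5 => ![0,3,1,2] | 6 => ![1,2,3,0] | 7 => ![3,2,0,1]
  | 8 => ![2,0,3,1] | 9 => ![1,0,2,3] | 10 => ![2,1,3,0] | 11 => ![2,1,3,0]
  | 12 => ![0,3,1,2] | 13 => ![1,0,2,3] | 14 => ![1,3,0,2]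
  | (j+15) => if j % 2 = 0 then ![0,1,2,3] else ![3,2,1,0]

lemma bB_lt4 : ∀ j i, bB j i < 4 := by
  intro j i
  match j with
  | 0 | 1 | 2 | 3 | 4 | 5 | 6 | 7 | 8 | 9 | 10 | 11 | 12 | 13 | 14 =>
    revert i; decide
  | (j+15) => dsimp [bB]; split <;> (revert i; decide)

lemma bB_inj : ∀ j, Function.Injective (bB j) := by
  intro j
  match j with
  | 0 | 1 | 2 | 3 | 4 | 5 | 6 | 7 | 8 | 9 | 10 | 11 | 12 | 13 | 14 => decide
  | (j+15) => dsimp [bB]; split <;> decide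

/-- flipped table at a node: voters in `S` are reversed. -/
def flipSet (S : List ℕ) (j : ℕ) : Fin 4 → ℕ :=
  if j ∈ S then (fun i => 3 - bB j i) else bB j

section
variable {A : Type*} {m : ℕ} (e : A ≃ Fin m) (hm : 4 ≤ m)

def rk (ht : Fin 4 → ℕ) (x : A) : ℕ :=
  if h : (e x : ℕ) < 4 then m + ht ⟨(e x : ℕ), h⟩ else (e x : ℕ)

lemma rk_lt_m_of_tail (ht : Fin 4 → ℕ) (x : A) (hx : ¬ ((e x : ℕ) < 4)) : rk e ht x < m := by
  simp only [rk, dif_neg hx]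
  exact (e x).isLt

lemma rk_inj (ht : Fin 4 → ℕ) (hht : Function.Injective ht) : Function.Injective (rk e ht) := by
  intro x y hxy
  unfold rk at hxy
  have : (e x : ℕ) = (e y : ℕ) := by
    split_ifs at hxy with h1 h2 h2
    · have := hht (by omega : ht ⟨(e x:ℕ), h1⟩ = ht ⟨(e y:ℕ), h2⟩)
      simpa [Fin.ext_iff] using this
    · have := (e y).isLt; omega
    · have := (e x).isLt; omega
    · omega
  exact e.injective (Fin.ext this)

def bal (ht : Fin 4 → ℕ) (hht : Function.Injective ht) : LinearOrder A :=
  LinearOrder.lift' (rk e ht) (rk_inj e ht hht)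

lemma bal_le_iff (ht) (hht) (x y : A) : (bal e ht hht).le x y ↔ rk e ht x ≤ rk e ht y := Iff.rfl
lemma bal_lt_iff (ht) (hht) (x y : A) : (bal e ht hht).lt x y ↔ rk e ht x < rk e ht y := Iff.rfl
lemma rev_lt_iff (L : LinearOrder A) (x y : A) : (revOrder L).lt x y ↔ L.lt y x := Iff.rfl
lemma rev_le_iff (L : LinearOrder A) (x y : A) : (revOrder L).le x y ↔ L.le y x := Iff.rfl

def sp (i : Fin 4) : A := e.symm ⟨i, lt_of_lt_of_le i.isLt hm⟩

lemma rk_sp (ht) (i : Fin 4) : rk e ht (sp e hm i) = m + ht i := by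
  simp [rk, sp]

lemma sp_inj : Function.Injective (sp e hm) := by
  intro i j h
  have := e.symm.injective h
  simpa [Fin.ext_iff] using this

/-- voter j's base ballot -/
def vb (j : ℕ) : LinearOrder A := bal e (bB j) (bB_inj j)

lemma vb_le_sp_iff (j : ℕ) (x y : Fin 4) :
    (vb e j).le (sp e hm x) (sp e hm y) ↔ bB j x ≤ bB j y := by
  rw [vb, bal_le_iff, rk_sp, rk_sp]; omega

lemma le_sp_cases (j : ℕ) (i : Fin 4) (x : A) (h : (vb e j).le (sp e hm i) x) :
    ∃ k : Fin 4, x = sp e hm k ∧ bB j i ≤ bB j k := by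
  have hr : rk e (bB j) (sp e hm i) ≤ rk e (bB j) x := h
  rw [rk_sp] at hr
  by_cases hx : (e x : ℕ) < 4
  · refine ⟨⟨(e x : ℕ), hx⟩, ?_, ?_⟩
    · rw [sp]
      have : (⟨((⟨(e x : ℕ), hx⟩ : Fin 4) : ℕ), lt_of_lt_of_le (⟨(e x:ℕ), hx⟩ : Fin 4).isLt hm⟩ : Fin m) = e x :=
        Fin.ext rfl
      rw [this, e.symm_apply_apply]
    · have : rk e (bB j) x = m + bB j ⟨(e x : ℕ), hx⟩ := by simp [rk, hx]
      omega
  · have := rk_lt_m_of_tail e (bB j) x hx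
    omega

/-- profile at the node whose reversed voters are those in `S` -/
def Pnode (S : List ℕ) : Fin (n) → LinearOrder A :=
  fun i => if i.val ∈ S then revOrder (vb e i.val) else vb e i.val

variable {n : ℕ}

lemma Pnode_apply_not_mem (S : List ℕ) (i : Fin n) (h : ¬ (i.val ∈ S)) :
    Pnode e S i = vb e i.val := by simp [Pnode, h]


lemma Pnode_apply (S : List ℕ) (v : ℕ) (i : Fin n) (hi : i.val = v) (h : ¬ (v ∈ S)) :
    Pnode e S i = vb e v := by
  subst hi; simp [Pnode, h]

lemma Pnode_congr (S S' : List ℕ) (h : ∀ j, j ∈ S ↔ j ∈ S') :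
    (Pnode e S : Fin n → LinearOrder A) = Pnode e S' := by
  funext i; simp only [Pnode, h]

lemma update_Pnode (S : List ℕ) (v : ℕ) (hv : v ∉ S) (i : Fin n) (hi : i.val = v) :
    Function.update (Pnode e S) i (revOrder (Pnode e S i)) = Pnode e (v :: S) := by
  funext k
  rcases eq_or_ne k i with rfl | hk
  · rw [Function.update_self]
    have h1 : Pnode e S k = vb e k.val := Pnode_apply_not_mem e S k (by rw [hi]; exact hv)
    have h2 : (Pnode e (v :: S) : Fin n → LinearOrder A) k = revOrder (vb e k.val) := by
      simp [Pnode, hi]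
    rw [h1, h2]
  · rw [Function.update_of_ne hk]
    have hkv : k.val ∈ (v :: S) ↔ k.val ∈ S := by
      simp only [List.mem_cons]
      constructor
      · rintro (h | h)
        · exact absurd (Fin.ext (h.trans hi.symm) : k = i) hk
        · exact h
      · exact Or.inr
    simp only [Pnode, hkv]

lemma lt_Pnode_sp (S : List ℕ) (i : Fin n) (x y : Fin 4) :
    (Pnode e S i).lt (sp e hm x) (sp e hm y) ↔ flipSet S i.val x < flipSet S i.val y := by
  have h4x := bB_lt4 i.val x
  have h4y := bB_lt4 i.val y
  by_cases h : i.val ∈ S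
  · rw [show Pnode e S i = revOrder (vb e i.val) from if_pos h]
    show rk e (bB i.val) (sp e hm y) < rk e (bB i.val) (sp e hm x) ↔ _
    simp only [Pnode, if_pos h, flipSet, rev_lt_iff, vb, bal_lt_iff, rk_sp]
    omega
  · rw [Pnode_apply_not_mem e S i h]
    show rk e (bB i.val) (sp e hm x) < rk e (bB i.val) (sp e hm y) ↔ _
    simp only [Pnode, if_neg h, flipSet, vb, bal_lt_iff, rk_sp]
    omega

lemma lt_Pnode_tailL (S : List ℕ) (i : Fin n) (x : Fin 4) (b : A) (hb : ¬ ((e b : ℕ) < 4)) :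
    (Pnode e S i).lt (sp e hm x) b ↔ i.val ∈ S := by
  have h1 := rk_lt_m_of_tail e (bB i.val) b hb
  by_cases h : i.val ∈ S
  · refine iff_of_true ?_ h
    rw [show Pnode e S i = revOrder (vb e i.val) from if_pos h]
    show rk e (bB i.val) b < rk e (bB i.val) (sp e hm x)
    rw [rk_sp]
    omega
  · refine iff_of_false ?_ h
    rw [Pnode_apply_not_mem e S i h]
    show ¬ rk e (bB i.val) (sp e hm x) < rk e (bB i.val) b
    rw [rk_sp]
    omega

lemma lt_Pnode_tailR (S : List ℕ) (i : Fin n) (x : Fin 4) (b : A) (hb : ¬ ((e b : ℕ) < 4)) :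
    (Pnode e S i).lt b (sp e hm x) ↔ ¬ (i.val ∈ S) := by
  have h1 := rk_lt_m_of_tail e (bB i.val) b hb
  by_cases h : i.val ∈ S
  · refine iff_of_false ?_ (by simpa using h)
    rw [show Pnode e S i = revOrder (vb e i.val) from if_pos h]
    show ¬ rk e (bB i.val) (sp e hm x) < rk e (bB i.val) b
    rw [rk_sp]
    omega
  · refine iff_of_true ?_ (by simpa using h)
    rw [Pnode_apply_not_mem e S i h]
    show rk e (bB i.val) b < rk e (bB i.val) (sp e hm x)
    rw [rk_sp]
    omega

end
end HWM

open Finset in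
lemma card_eq_sum_range {n : ℕ} (q : ℕ → Prop) [DecidablePred q] :
    Nat.card {i : Fin n // q i.val} = ∑ j ∈ Finset.range n, if q j then 1 else 0 := by
  rw [Nat.card_eq_fintype_card, Fintype.card_subtype, Finset.card_filter]
  exact Fin.sum_univ_eq_sum_range (fun j => if q j then 1 else 0) n

lemma card_eq_sum_range' {n : ℕ} (p : Fin n → Prop) (q : ℕ → Prop) [DecidablePred q]
    (h : ∀ i : Fin n, p i ↔ q i.val) :
    Nat.card {i : Fin n // p i} = ∑ j ∈ Finset.range n, if q j then 1 else 0 := by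
  rw [Nat.card_congr (Equiv.subtypeEquivRight h)]
  exact card_eq_sum_range q

lemma sum_split {n : ℕ} (hn : 15 ≤ n) (g : ℕ → ℕ) :
    ∑ j ∈ Finset.range n, g j = (∑ j ∈ Finset.range 15, g j) + ∑ j ∈ Finset.Ico 15 n, g j := by
  rw [Finset.range_eq_Ico, ← Finset.sum_Ico_consecutive _ (Nat.zero_le 15) hn, Finset.range_eq_Ico]

lemma pad_sum_even (t : ℕ) (q : ℕ → Prop) [DecidablePred q]
    (h : ∀ j, 15 ≤ j → (q j ↔ (j - 15) % 2 = 0)) :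
    ∑ j ∈ Finset.Ico 15 (15 + 2 * t), (if q j then 1 else 0) = t := by
  induction t with
  | zero => simp
  | succ t ih =>
    have h1 : 15 + 2 * (t+1) = (15 + 2*t) + 1 + 1 := by ring
    rw [h1, Finset.sum_Ico_succ_top (by omega), Finset.sum_Ico_succ_top (by omega), ih]
    have e1 : q (15 + 2*t) := by rw [h _ (by omega)]; omega
    have e2 : ¬ q (15 + 2*t + 1) := by rw [h _ (by omega)]; omega
    simp [e1, e2]

lemma pad_sum_odd (t : ℕ) (q : ℕ → Prop) [DecidablePred q]
    (h : ∀ j, 15 ≤ j → (q j ↔ (j - 15) % 2 = 1)) :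
    ∑ j ∈ Finset.Ico 15 (15 + 2 * t), (if q j then 1 else 0) = t := by
  induction t with
  | zero => simp
  | succ t ih =>
    have h1 : 15 + 2 * (t+1) = (15 + 2*t) + 1 + 1 := by ring
    rw [h1, Finset.sum_Ico_succ_top (by omega), Finset.sum_Ico_succ_top (by omega), ih]
    have e1 : ¬ q (15 + 2*t) := by rw [h _ (by omega)]; omega
    have e2 : q (15 + 2*t + 1) := by rw [h _ (by omega)]; omega
    simp [e1, e2]

lemma pad_sum_false (t : ℕ) (q : ℕ → Prop) [DecidablePred q]
    (h : ∀ j, 15 ≤ j → ¬ q j) :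
    ∑ j ∈ Finset.Ico 15 (15 + 2 * t), (if q j then 1 else 0) = 0 := by
  apply Finset.sum_eq_zero
  intro j hj
  simp only [Finset.mem_Ico] at hj
  simp [h j hj.1]

lemma pad_sum_true (t : ℕ) (q : ℕ → Prop) [DecidablePred q]
    (h : ∀ j, 15 ≤ j → q j) :
    ∑ j ∈ Finset.Ico 15 (15 + 2 * t), (if q j then 1 else 0) = 2 * t := by
  have hc : ∀ j ∈ Finset.Ico 15 (15+2*t), (if q j then 1 else 0) = 1 := by
    intro j hj; simp only [Finset.mem_Ico] at hj; simp [h j hj.1]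
  rw [Finset.sum_congr rfl hc]
  simp [Nat.card_Ico]

namespace HWM

lemma bB_pad (k : ℕ) (x y : Fin 4) :
    bB (k+15) x < bB (k+15) y ↔
      ((k % 2 = 0 ∧ (x:ℕ) < (y:ℕ)) ∨ (k % 2 = 1 ∧ (y:ℕ) < (x:ℕ))) := by
  show (if k % 2 = 0 then ![0,1,2,3] else ![3,2,1,0]) x <
      (if k % 2 = 0 then ![0,1,2,3] else ![3,2,1,0]) y ↔ _
  rcases Nat.mod_two_eq_zero_or_one k with h | h <;> simp only [h] <;>
    simp only [reduceIte, Nat.zero_ne_one, Nat.one_ne_zero, false_and, true_and,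
      false_or, or_false] <;> (revert x y; decide)

lemma pad_sum_bB (t : ℕ) (x y : Fin 4) (hxy : x ≠ y) :
    ∑ j ∈ Finset.Ico 15 (15 + 2 * t), (if bB j x < bB j y then 1 else 0) = t := by
  have hval : (x : ℕ) ≠ (y : ℕ) := fun h => hxy (Fin.ext h)
  rcases Nat.lt_or_ge (x : ℕ) (y : ℕ) with h | h
  · apply pad_sum_even
    intro j hj
    obtain ⟨k, rfl⟩ : ∃ k, j = k + 15 := ⟨j - 15, by omega⟩
    rw [bB_pad]
    omega
  · apply pad_sum_odd
    intro j hj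
    obtain ⟨k, rfl⟩ : ∃ k, j = k + 15 := ⟨j - 15, by omega⟩
    rw [bB_pad]
    omega

section
variable {A : Type*} {m : ℕ} (e : A ≃ Fin m) (hm : 4 ≤ m) {n : ℕ}

lemma card_lt_special (S : List ℕ) (hS : ∀ s ∈ S, s < 15) (x y : Fin 4) (hxy : x ≠ y)
    (t : ℕ) (hnt : n = 15 + 2*t) :
    Nat.card {i : Fin n // (Pnode e S i).lt (sp e hm x) (sp e hm y)} =
      (∑ j ∈ Finset.range 15, if flipSet S j x < flipSet S j y then 1 else 0) + t := by
  rw [card_eq_sum_range' _ (fun j => flipSet S j x < flipSet S j y)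
    (fun i => lt_Pnode_sp e hm S i x y), hnt, sum_split (by omega)]
  congr 1
  have hc : ∀ j ∈ Finset.Ico 15 (15+2*t),
      (if flipSet S j x < flipSet S j y then 1 else 0) = (if bB j x < bB j y then 1 else 0) := by
    intro j hj
    simp only [Finset.mem_Ico] at hj
    have hjS : j ∉ S := fun hmem => absurd (hS _ hmem) (by omega)
    simp only [flipSet, if_neg hjS]
  rw [Finset.sum_congr rfl hc]
  exact pad_sum_bB t x y hxy

lemma card_lt_tail_L (S : List ℕ) (hS : ∀ s ∈ S, s < 15) (x : Fin 4) (b : A)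
    (hb : ¬ ((e b : ℕ) < 4)) (t : ℕ) (hnt : n = 15 + 2*t) :
    Nat.card {i : Fin n // (Pnode e S i).lt (sp e hm x) b} =
      (∑ j ∈ Finset.range 15, if j ∈ S then 1 else 0) := by
  rw [card_eq_sum_range' _ (fun j => j ∈ S)
    (fun i => lt_Pnode_tailL e hm S i x b hb), hnt, sum_split (by omega)]
  rw [pad_sum_false t _ (fun j hj hmem => absurd (hS _ hmem) (by omega))]
  omega

lemma card_lt_tail_R (S : List ℕ) (hS : ∀ s ∈ S, s < 15) (x : Fin 4) (b : A)
    (hb : ¬ ((e b : ℕ) < 4)) (t : ℕ) (hnt : n = 15 + 2*t) :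
    Nat.card {i : Fin n // (Pnode e S i).lt b (sp e hm x)} =
      (∑ j ∈ Finset.range 15, if ¬ (j ∈ S) then 1 else 0) + 2*t := by
  rw [card_eq_sum_range' _ (fun j => ¬ (j ∈ S))
    (fun i => lt_Pnode_tailR e hm S i x b hb), hnt, sum_split (by omega)]
  rw [pad_sum_true t _ (fun j hj hmem => absurd (hS _ hmem) (by omega))]

lemma cw_helper (S : List ℕ) (hS : ∀ s ∈ S, s < 15) (w : Fin 4)
    (hhead : ∀ z : Fin 4, z ≠ w →
      (∑ j ∈ Finset.range 15, if flipSet S j w < flipSet S j z then 1 else 0) <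
      (∑ j ∈ Finset.range 15, if flipSet S j z < flipSet S j w then 1 else 0))
    (hrev : (∑ j ∈ Finset.range 15, if j ∈ S then 1 else 0) <
      (∑ j ∈ Finset.range 15, if ¬ (j ∈ S) then 1 else 0))
    (t : ℕ) (hnt : n = 15 + 2*t) :
    IsCondorcetWinner (Pnode e S : Fin n → LinearOrder A) (sp e hm w) := by
  intro b hb
  by_cases hb4 : (e b : ℕ) < 4
  · have hbz : b = sp e hm ⟨(e b : ℕ), hb4⟩ := by
      rw [sp]
      have h2 : (⟨((⟨(e b : ℕ), hb4⟩ : Fin 4) : ℕ),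
          lt_of_lt_of_le (⟨(e b:ℕ), hb4⟩ : Fin 4).isLt hm⟩ : Fin m) = e b := Fin.ext rfl
      rw [h2, e.symm_apply_apply]
    have hzw : (⟨(e b:ℕ), hb4⟩ : Fin 4) ≠ w := fun h => hb (by rw [hbz, h])
    rw [hbz, card_lt_special e hm S hS w _ (Ne.symm hzw) t hnt,
      card_lt_special e hm S hS _ w hzw t hnt]
    have := hhead _ hzw
    omega
  · rw [card_lt_tail_L e hm S hS w b hb4 t hnt, card_lt_tail_R e hm S hS w b hb4 t hnt]
    omega

end
end HWM


set_option maxHeartbeats 4000000 in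
/-- For at least 4 alternatives and any odd number `n ≥ 15` of voters, no Condorcet
extension satisfies half-way monotonicity. -/
theorem no_condorcet_hwm_odd {A : Type*} [Fintype A] (hA : 4 ≤ Fintype.card A)
    (n : ℕ) (hodd : Odd n) (hn : 15 ≤ n) :
    ¬ ∃ f : (Fin n → LinearOrder A) → A,
        CondorcetExtension f ∧ HalfwayMonotone f := by
  rintro ⟨f, hCE, hHW⟩
  have e : A ≃ Fin (Fintype.card A) := Fintype.equivFin A
  obtain ⟨k, hk⟩ := hodd
  obtain ⟨t, hnt⟩ : ∃ t, n = 15 + 2 * t := ⟨k - 7, by omega⟩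
  have hC018 : f (HWM.Pnode e [0, 1, 8]) = HWM.sp e hA 0 :=
    hCE _ _ (HWM.cw_helper e hA [0, 1, 8] (by decide) 0
      (by intro z hz; fin_cases z <;> first | exact absurd rfl hz | decide)
      (by decide) t hnt)
  have hC235 : f (HWM.Pnode e [2, 3, 5]) = HWM.sp e hA 3 :=
    hCE _ _ (HWM.cw_helper e hA [2, 3, 5] (by decide) 3
      (by intro z hz; fin_cases z <;> first | exact absurd rfl hz | decide)
      (by decide) t hnt)
  have hC2314 : f (HWM.Pnode e [2, 3, 14]) = HWM.sp e hA 3 :=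
    hCE _ _ (HWM.cw_helper e hA [2, 3, 14] (by decide) 3
      (by intro z hz; fin_cases z <;> first | exact absurd rfl hz | decide)
      (by decide) t hnt)
  have hC0125 : f (HWM.Pnode e [0, 1, 2, 5]) = HWM.sp e hA 2 :=
    hCE _ _ (HWM.cw_helper e hA [0, 1, 2, 5] (by decide) 2
      (by intro z hz; fin_cases z <;> first | exact absurd rfl hz | decide)
      (by decide) t hnt)
  have hC01514 : f (HWM.Pnode e [0, 1, 5, 14]) = HWM.sp e hA 2 :=
    hCE _ _ (HWM.cw_helper e hA [0, 1, 5, 14] (by decide) 2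
      (by intro z hz; fin_cases z <;> first | exact absurd rfl hz | decide)
      (by decide) t hnt)
  have hC281011 : f (HWM.Pnode e [2, 8, 10, 11]) = HWM.sp e hA 1 :=
    hCE _ _ (HWM.cw_helper e hA [2, 8, 10, 11] (by decide) 1
      (by intro z hz; fin_cases z <;> first | exact absurd rfl hz | decide)
      (by decide) t hnt)
  have hE13 : (HWM.vb e 3 : LinearOrder A).le (f (HWM.Pnode e [2, 3, 5])) (f (HWM.Pnode e [2, 5])) := by
    have h := hHW (HWM.Pnode e [2, 5]) (⟨3, by omega⟩ : Fin n)
    rw [HWM.update_Pnode e [2, 5] 3 (by decide) _ rfl] at h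
    rw [HWM.Pnode_congr e (3 :: [2, 5]) [2, 3, 5] (by intro j; simp only [List.mem_cons, List.not_mem_nil, or_false]; try omega)] at h
    rw [HWM.Pnode_apply e [2, 5] 3 _ rfl (by decide)] at h
    exact h
  have hE18 : (HWM.vb e 1 : LinearOrder A).le (f (HWM.Pnode e [0, 1, 2, 5])) (f (HWM.Pnode e [0, 2, 5])) := by
    have h := hHW (HWM.Pnode e [0, 2, 5]) (⟨1, by omega⟩ : Fin n)
    rw [HWM.update_Pnode e [0, 2, 5] 1 (by decide) _ rfl] at h
    rw [HWM.Pnode_congr e (1 :: [0, 2, 5]) [0, 1, 2, 5] (by intro j; simp only [List.mem_cons, List.not_mem_nil, or_false]; try omega)] at h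
    rw [HWM.Pnode_apply e [0, 2, 5] 1 _ rfl (by decide)] at h
    exact h
  have hE14 : (HWM.vb e 0 : LinearOrder A).le (f (HWM.Pnode e [0, 2, 5])) (f (HWM.Pnode e [2, 5])) := by
    have h := hHW (HWM.Pnode e [2, 5]) (⟨0, by omega⟩ : Fin n)
    rw [HWM.update_Pnode e [2, 5] 0 (by decide) _ rfl] at h
    rw [HWM.Pnode_congr e (0 :: [2, 5]) [0, 2, 5] (by intro j; simp only [List.mem_cons, List.not_mem_nil, or_false]; try omega)] at h
    rw [HWM.Pnode_apply e [2, 5] 0 _ rfl (by decide)] at h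
    exact h
  have hE3 : (HWM.vb e 5 : LinearOrder A).le (f (HWM.Pnode e [2, 5])) (f (HWM.Pnode e [2])) := by
    have h := hHW (HWM.Pnode e [2]) (⟨5, by omega⟩ : Fin n)
    rw [HWM.update_Pnode e [2] 5 (by decide) _ rfl] at h
    rw [HWM.Pnode_congr e (5 :: [2]) [2, 5] (by intro j; simp only [List.mem_cons, List.not_mem_nil, or_false]; try omega)] at h
    rw [HWM.Pnode_apply e [2] 5 _ rfl (by decide)] at h
    exact h
  have hE16 : (HWM.vb e 3 : LinearOrder A).le (f (HWM.Pnode e [2, 3, 14])) (f (HWM.Pnode e [2, 14])) := by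
    have h := hHW (HWM.Pnode e [2, 14]) (⟨3, by omega⟩ : Fin n)
    rw [HWM.update_Pnode e [2, 14] 3 (by decide) _ rfl] at h
    rw [HWM.Pnode_congr e (3 :: [2, 14]) [2, 3, 14] (by intro j; simp only [List.mem_cons, List.not_mem_nil, or_false]; try omega)] at h
    rw [HWM.Pnode_apply e [2, 14] 3 _ rfl (by decide)] at h
    exact h
  have hE17 : (HWM.vb e 5 : LinearOrder A).le (f (HWM.Pnode e [0, 1, 5, 14])) (f (HWM.Pnode e [0, 1, 14])) := by
    have h := hHW (HWM.Pnode e [0, 1, 14]) (⟨5, by omega⟩ : Fin n)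
    rw [HWM.update_Pnode e [0, 1, 14] 5 (by decide) _ rfl] at h
    rw [HWM.Pnode_congr e (5 :: [0, 1, 14]) [0, 1, 5, 14] (by intro j; simp only [List.mem_cons, List.not_mem_nil, or_false]; try omega)] at h
    rw [HWM.Pnode_apply e [0, 1, 14] 5 _ rfl (by decide)] at h
    exact h
  have hE9 : (HWM.vb e 8 : LinearOrder A).le (f (HWM.Pnode e [0, 1, 8])) (f (HWM.Pnode e [0, 1])) := by
    have h := hHW (HWM.Pnode e [0, 1]) (⟨8, by omega⟩ : Fin n)
    rw [HWM.update_Pnode e [0, 1] 8 (by decide) _ rfl] at h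
    rw [HWM.Pnode_congr e (8 :: [0, 1]) [0, 1, 8] (by intro j; simp only [List.mem_cons, List.not_mem_nil, or_false]; try omega)] at h
    rw [HWM.Pnode_apply e [0, 1] 8 _ rfl (by decide)] at h
    exact h
  have hE10 : (HWM.vb e 14 : LinearOrder A).le (f (HWM.Pnode e [0, 1, 14])) (f (HWM.Pnode e [0, 1])) := by
    have h := hHW (HWM.Pnode e [0, 1]) (⟨14, by omega⟩ : Fin n)
    rw [HWM.update_Pnode e [0, 1] 14 (by decide) _ rfl] at h
    rw [HWM.Pnode_congr e (14 :: [0, 1]) [0, 1, 14] (by intro j; simp only [List.mem_cons, List.not_mem_nil, or_false]; try omega)] at h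
    rw [HWM.Pnode_apply e [0, 1] 14 _ rfl (by decide)] at h
    exact h
  have hE12 : (HWM.vb e 1 : LinearOrder A).le (f (HWM.Pnode e [0, 1, 14])) (f (HWM.Pnode e [0, 14])) := by
    have h := hHW (HWM.Pnode e [0, 14]) (⟨1, by omega⟩ : Fin n)
    rw [HWM.update_Pnode e [0, 14] 1 (by decide) _ rfl] at h
    rw [HWM.Pnode_congr e (1 :: [0, 14]) [0, 1, 14] (by intro j; simp only [List.mem_cons, List.not_mem_nil, or_false]; try omega)] at h
    rw [HWM.Pnode_apply e [0, 14] 1 _ rfl (by decide)] at h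
    exact h
  have hE7 : (HWM.vb e 0 : LinearOrder A).le (f (HWM.Pnode e [0, 14])) (f (HWM.Pnode e [14])) := by
    have h := hHW (HWM.Pnode e [14]) (⟨0, by omega⟩ : Fin n)
    rw [HWM.update_Pnode e [14] 0 (by decide) _ rfl] at h
    rw [HWM.Pnode_congr e (0 :: [14]) [0, 14] (by intro j; simp only [List.mem_cons, List.not_mem_nil, or_false]; try omega)] at h
    rw [HWM.Pnode_apply e [14] 0 _ rfl (by decide)] at h
    exact h
  have hE8 : (HWM.vb e 2 : LinearOrder A).le (f (HWM.Pnode e [2, 14])) (f (HWM.Pnode e [14])) := by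
    have h := hHW (HWM.Pnode e [14]) (⟨2, by omega⟩ : Fin n)
    rw [HWM.update_Pnode e [14] 2 (by decide) _ rfl] at h
    rw [HWM.Pnode_congr e (2 :: [14]) [2, 14] (by intro j; simp only [List.mem_cons, List.not_mem_nil, or_false]; try omega)] at h
    rw [HWM.Pnode_apply e [14] 2 _ rfl (by decide)] at h
    exact h
  have hE2 : (HWM.vb e 14 : LinearOrder A).le (f (HWM.Pnode e [14])) (f (HWM.Pnode e [])) := by
    have h := hHW (HWM.Pnode e []) (⟨14, by omega⟩ : Fin n)
    rw [HWM.update_Pnode e [] 14 (by decide) _ rfl] at h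
    rw [HWM.Pnode_congr e (14 :: []) [14] (by intro j; simp only [List.mem_cons, List.not_mem_nil, or_false]; try omega)] at h
    rw [HWM.Pnode_apply e [] 14 _ rfl (by decide)] at h
    exact h
  have hE19 : (HWM.vb e 11 : LinearOrder A).le (f (HWM.Pnode e [2, 8, 10, 11])) (f (HWM.Pnode e [2, 8, 10])) := by
    have h := hHW (HWM.Pnode e [2, 8, 10]) (⟨11, by omega⟩ : Fin n)
    rw [HWM.update_Pnode e [2, 8, 10] 11 (by decide) _ rfl] at h
    rw [HWM.Pnode_congr e (11 :: [2, 8, 10]) [2, 8, 10, 11] (by intro j; simp only [List.mem_cons, List.not_mem_nil, or_false]; try omega)] at h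
    rw [HWM.Pnode_apply e [2, 8, 10] 11 _ rfl (by decide)] at h
    exact h
  have hE15 : (HWM.vb e 10 : LinearOrder A).le (f (HWM.Pnode e [2, 8, 10])) (f (HWM.Pnode e [2, 8])) := by
    have h := hHW (HWM.Pnode e [2, 8]) (⟨10, by omega⟩ : Fin n)
    rw [HWM.update_Pnode e [2, 8] 10 (by decide) _ rfl] at h
    rw [HWM.Pnode_congr e (10 :: [2, 8]) [2, 8, 10] (by intro j; simp only [List.mem_cons, List.not_mem_nil, or_false]; try omega)] at h
    rw [HWM.Pnode_apply e [2, 8] 10 _ rfl (by decide)] at h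
    exact h
  have hE4 : (HWM.vb e 8 : LinearOrder A).le (f (HWM.Pnode e [2, 8])) (f (HWM.Pnode e [2])) := by
    have h := hHW (HWM.Pnode e [2]) (⟨8, by omega⟩ : Fin n)
    rw [HWM.update_Pnode e [2] 8 (by decide) _ rfl] at h
    rw [HWM.Pnode_congr e (8 :: [2]) [2, 8] (by intro j; simp only [List.mem_cons, List.not_mem_nil, or_false]; try omega)] at h
    rw [HWM.Pnode_apply e [2] 8 _ rfl (by decide)] at h
    exact h
  have hE6 : (HWM.vb e 2 : LinearOrder A).le (f (HWM.Pnode e [2, 8])) (f (HWM.Pnode e [8])) := by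
    have h := hHW (HWM.Pnode e [8]) (⟨2, by omega⟩ : Fin n)
    rw [HWM.update_Pnode e [8] 2 (by decide) _ rfl] at h
    rw [HWM.Pnode_congr e (2 :: [8]) [2, 8] (by intro j; simp only [List.mem_cons, List.not_mem_nil, or_false]; try omega)] at h
    rw [HWM.Pnode_apply e [8] 2 _ rfl (by decide)] at h
    exact h
  have hE11 : (HWM.vb e 1 : LinearOrder A).le (f (HWM.Pnode e [0, 1, 8])) (f (HWM.Pnode e [0, 8])) := by
    have h := hHW (HWM.Pnode e [0, 8]) (⟨1, by omega⟩ : Fin n)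
    rw [HWM.update_Pnode e [0, 8] 1 (by decide) _ rfl] at h
    rw [HWM.Pnode_congr e (1 :: [0, 8]) [0, 1, 8] (by intro j; simp only [List.mem_cons, List.not_mem_nil, or_false]; try omega)] at h
    rw [HWM.Pnode_apply e [0, 8] 1 _ rfl (by decide)] at h
    exact h
  have hE5 : (HWM.vb e 0 : LinearOrder A).le (f (HWM.Pnode e [0, 8])) (f (HWM.Pnode e [8])) := by
    have h := hHW (HWM.Pnode e [8]) (⟨0, by omega⟩ : Fin n)
    rw [HWM.update_Pnode e [8] 0 (by decide) _ rfl] at h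
    rw [HWM.Pnode_congr e (0 :: [8]) [0, 8] (by intro j; simp only [List.mem_cons, List.not_mem_nil, or_false]; try omega)] at h
    rw [HWM.Pnode_apply e [8] 0 _ rfl (by decide)] at h
    exact h
  have hE1 : (HWM.vb e 8 : LinearOrder A).le (f (HWM.Pnode e [8])) (f (HWM.Pnode e [])) := by
    have h := hHW (HWM.Pnode e []) (⟨8, by omega⟩ : Fin n)
    rw [HWM.update_Pnode e [] 8 (by decide) _ rfl] at h
    rw [HWM.Pnode_congr e (8 :: []) [8] (by intro j; simp only [List.mem_cons, List.not_mem_nil, or_false]; try omega)] at h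
    rw [HWM.Pnode_apply e [] 8 _ rfl (by decide)] at h
    exact h
  rw [hC235] at hE13
  rw [hC0125] at hE18
  rw [hC2314] at hE16
  rw [hC01514] at hE17
  rw [hC018] at hE9
  rw [hC281011] at hE19
  rw [hC018] at hE11
  -- pin f (Pnode [2,5]) = sp 3
  have hP1 : f (HWM.Pnode e [2, 5]) = HWM.sp e hA 3 := by
    obtain ⟨j, hEq, hN⟩ := HWM.le_sp_cases e hA 3 3 _ hE13
    obtain ⟨j2, hEq2, hN2⟩ := HWM.le_sp_cases e hA 1 2 _ hE18
    rw [hEq, hEq2, HWM.vb_le_sp_iff] at hE14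
    have hj : j = 3 := by fin_cases j <;> fin_cases j2 <;> revert hN hN2 hE14 <;> decide
    rw [hEq, hj]
  rw [hP1] at hE3
  -- pin f (Pnode [0,1,14]) = sp 2
  have hP2 : f (HWM.Pnode e [0, 1, 14]) = HWM.sp e hA 2 := by
    obtain ⟨j, hEq, hN⟩ := HWM.le_sp_cases e hA 5 2 _ hE17
    obtain ⟨j2, hEq2, hN2⟩ := HWM.le_sp_cases e hA 8 0 _ hE9
    rw [hEq, hEq2, HWM.vb_le_sp_iff] at hE10
    have hj : j = 2 := by fin_cases j <;> fin_cases j2 <;> revert hN hN2 hE10 <;> decide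
    rw [hEq, hj]
  rw [hP2] at hE12
  -- pin f (Pnode [14]) = sp 3
  have hP3 : f (HWM.Pnode e [14]) = HWM.sp e hA 3 := by
    obtain ⟨j, hEq, hN⟩ := HWM.le_sp_cases e hA 1 2 _ hE12
    obtain ⟨j2, hEq2, hN2⟩ := HWM.le_sp_cases e hA 3 3 _ hE16
    rw [hEq] at hE7
    obtain ⟨j3, hEq3, hN3⟩ := HWM.le_sp_cases e hA 0 j _ hE7
    rw [hEq2, hEq3, HWM.vb_le_sp_iff] at hE8
    have hj : j3 = 3 := by
      fin_cases j <;> fin_cases j2 <;> fin_cases j3 <;> revert hN hN2 hN3 hE8 <;> decide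
    rw [hEq3, hj]
  rw [hP3] at hE2
  -- pin f (Pnode [2,8]) = sp 1
  have hP4 : f (HWM.Pnode e [2, 8]) = HWM.sp e hA 1 := by
    obtain ⟨j, hEq, hN⟩ := HWM.le_sp_cases e hA 11 1 _ hE19
    obtain ⟨j2, hEq2, hN2⟩ := HWM.le_sp_cases e hA 5 3 _ hE3
    rw [hEq] at hE15
    obtain ⟨j3, hEq3, hN3⟩ := HWM.le_sp_cases e hA 10 j _ hE15
    rw [hEq3, hEq2, HWM.vb_le_sp_iff] at hE4
    have hj : j3 = 1 := by
      fin_cases j <;> fin_cases j2 <;> fin_cases j3 <;> revert hN hN2 hN3 hE4 <;> decide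
    rw [hEq3, hj]
  rw [hP4] at hE6
  -- pin f (Pnode [8]) = sp 0
  have hP5 : f (HWM.Pnode e [8]) = HWM.sp e hA 0 := by
    obtain ⟨j, hEq, hN⟩ := HWM.le_sp_cases e hA 2 1 _ hE6
    obtain ⟨j2, hEq2, hN2⟩ := HWM.le_sp_cases e hA 1 0 _ hE11
    rw [hEq2, hEq, HWM.vb_le_sp_iff] at hE5
    have hj : j = 0 := by fin_cases j <;> fin_cases j2 <;> revert hN hN2 hE5 <;> decide
    rw [hEq, hj]
  rw [hP5] at hE1
  -- final contradiction at the base profile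
  obtain ⟨j, hEq, hN⟩ := HWM.le_sp_cases e hA 14 3 _ hE2
  rw [hEq, HWM.vb_le_sp_iff] at hE1
  revert hN hE1
  fin_cases j <;> decide
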